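/- Let Q be a quiver containing either a cycle or a pair of parallel arrows, and d a dimension vector with d_i ≥ 1 for all vertices on the cycle (respectively, on the two endpoints of the parallel arrows). Then over an infinite field, G_d acts on R_d(Q) with infinitely many orbits; in particular R_d(Q) is not spherical. -/

import Mathlib

section QuiverDefs

variable {V A : Type} [Fintype V] [Fintype A] [DecidableEq V]

/-- The Euler form of the quiver with arrows `a : s a → t a`. -/
def eulerForm (s t : A → V) (d e : V → ℤ) : ℤ :=
  (∑ i, d i * e i) - ∑ a, d (s a) * e (t a)

/-- The symmetrized Euler form. -/
def symForm (s t : A → V) (d e : V → ℤ) : ℤ :=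
  eulerForm s t d e + eulerForm s t e d

/-- The simple reflection at vertex `i`. -/
def reflAt (s t : A → V) (i : V) (d : V → ℤ) : V → ℤ :=
  fun j => d j - symForm s t d (Pi.single i 1) * ((Pi.single i 1 : V → ℤ) j)

def adjacent (s t : A → V) (i j : V) : Prop :=
  ∃ a, (s a = i ∧ t a = j) ∨ (s a = j ∧ t a = i)

def connectedSupport (s t : A → V) (f : V → ℤ) : Prop :=
  ∀ i j, f i ≠ 0 → f j ≠ 0 →
    Relation.ReflTransGen (fun p q => adjacent s t p q ∧ f p ≠ 0 ∧ f q ≠ 0) i j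

/-- Membership in the fundamental domain. -/
def inFund (s t : A → V) (f : V → ℤ) : Prop :=
  f ≠ 0 ∧ (∀ i, 0 ≤ f i) ∧ connectedSupport s t f ∧
    ∀ i, symForm s t f (Pi.single i 1) ≤ 0

/-- Imaginary roots: Weyl group translates of the fundamental domain. -/
inductive IsImaginaryRoot (s t : A → V) : (V → ℤ) → Prop
  | fund (f) : inFund s t f → IsImaginaryRoot s t f
  | refl (i f) : IsImaginaryRoot s t f → IsImaginaryRoot s t (reflAt s t i f)

/-- Real roots: Weyl group translates of the coordinate vectors. -/
inductive IsRealRoot (s t : A → V) : (V → ℤ) → Prop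
  | simple (i : V) : IsRealRoot s t (Pi.single i 1)
  | refl (i f) : IsRealRoot s t f → IsRealRoot s t (reflAt s t i f)

variable (K : Type) [Field K]

/-- The representation space of the quiver at dimension vector `n`. -/
def QRepSp (s t : A → V) (n : V → ℕ) : Type :=
  ∀ a : A, Matrix (Fin (n (t a))) (Fin (n (s a))) K

def IsEndo (s t : A → V) {n : V → ℕ} (x : QRepSp K s t n)
    (φ : ∀ i, Matrix (Fin (n i)) (Fin (n i)) K) : Prop :=
  ∀ a, φ (t a) * x a = x a * φ (s a)

/-- A representation is indecomposable if it is nonzero and admits no nontrivial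
idempotent endomorphism. -/
def Indecomposable (s t : A → V) {n : V → ℕ} (x : QRepSp K s t n) : Prop :=
  (∃ i, n i ≠ 0) ∧
  ∀ φ, IsEndo K s t x φ → (∀ i, φ i * φ i = φ i) →
    (∀ i, φ i = 0) ∨ (∀ i, φ i = 1)

/-- Isomorphism of representations (same orbit of the base change group). -/
def IsIso (s t : A → V) {n : V → ℕ} (x y : QRepSp K s t n) : Prop :=
  ∃ g : ∀ i, (Matrix (Fin (n i)) (Fin (n i)) K)ˣ,
    ∀ a, (g (t a)).1 * x a = y a * (g (s a)).1


section Aux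

open Matrix
open Fin.NatCast

variable (s t : A → V) (d : V → ℕ)

/-- The "rectangular identity" matrix. -/
def EmM (p q : ℕ) : Matrix (Fin p) (Fin q) K :=
  Matrix.of fun i j => if (i : ℕ) = (j : ℕ) then 1 else 0

/-- The first standard basis vector (zero if `n = 0`). -/
def eVec (n : ℕ) : Fin n → K := fun i => if (i : ℕ) = 0 then 1 else 0

lemma EmM_mulVec (p q : ℕ) (w : Fin q → K) (i : Fin p) :
    (EmM K p q *ᵥ w) i = if h : (i : ℕ) < q then w ⟨i, h⟩ else 0 := by
  unfold EmM
  rw [Matrix.mulVec, dotProduct]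
  by_cases h : (i : ℕ) < q
  · rw [dif_pos h]
    rw [Finset.sum_eq_single (⟨(i : ℕ), h⟩ : Fin q)]
    · simp
    · intro b _ hb
      rw [Matrix.of_apply, if_neg, zero_mul]
      intro he; exact hb (Fin.ext he.symm)
    · simp
  · rw [dif_neg h]
    apply Finset.sum_eq_zero
    intro b _
    rw [Matrix.of_apply, if_neg, zero_mul]
    intro he; exact h (he ▸ b.isLt)

/-- The representation all of whose matrices are rectangular identities. -/
def Erep : QRepSp K s t d := fun a => EmM K (d (t a)) (d (s a))

lemma g_mulVec_eVec_ne (g : ∀ i, (Matrix (Fin (d i)) (Fin (d i)) K)ˣ)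
    (p : V) (hp : 1 ≤ d p) : (g p).1 *ᵥ eVec K (d p) ≠ 0 := by
  intro h0
  have h1 : ((g p)⁻¹).1 *ᵥ ((g p).1 *ᵥ eVec K (d p)) = eVec K (d p) := by
    rw [Matrix.mulVec_mulVec, ← Units.val_mul, inv_mul_cancel, Units.val_one,
      Matrix.one_mulVec]
  rw [h0, Matrix.mulVec_zero] at h1
  have h2 := congrFun h1 ⟨0, hp⟩
  simp [eVec] at h2

variable {m : ℕ} (c : Fin (m + 1) → A)

/-- The `j`-th vertex along the cycle. -/
abbrev nuV (j : ℕ) : V := s (c (j : Fin (m + 1)))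

lemma nuV_succ (hc : ∀ j : Fin (m + 1), t (c j) = s (c (j + 1))) (j : ℕ) :
    t (c (j : Fin (m + 1))) = nuV s c (j + 1) := by
  rw [hc]
  show s (c ((j : Fin (m + 1)) + 1)) = s (c ((j + 1 : ℕ) : Fin (m + 1)))
  congr 2
  exact (Nat.cast_add_one j).symm

/-- Propagation of a vector along the cycle. -/
def cprop (hc : ∀ j : Fin (m + 1), t (c j) = s (c (j + 1))) (x : QRepSp K s t d) :
    (j : ℕ) → (Fin (d (nuV s c 0)) → K) → (Fin (d (nuV s c j)) → K)
  | 0 => fun v => v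
  | j + 1 => fun v i =>
      (x (c (j : Fin (m + 1))) *ᵥ cprop hc x j v)
        (Fin.cast (congrArg d (nuV_succ s t c hc j)).symm i)

lemma g_mulVec_cast (g : ∀ i, (Matrix (Fin (d i)) (Fin (d i)) K)ˣ)
    {p q : V} (e : p = q) (w : Fin (d p) → K) (i : Fin (d q)) :
    ((g p).1 *ᵥ w) (Fin.cast (congrArg d e).symm i)
      = ((g q).1 *ᵥ fun i' => w (Fin.cast (congrArg d e).symm i')) i := by
  subst e; rfl

lemma gEvec_cast (g : ∀ i, (Matrix (Fin (d i)) (Fin (d i)) K)ˣ)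
    {p q : V} (e : p = q) (i : Fin (d p)) :
    ((g p).1 *ᵥ eVec K (d p)) i
      = ((g q).1 *ᵥ eVec K (d q)) (Fin.cast (congrArg d e) i) := by
  subst e; rfl

lemma cprop_compat (hc : ∀ j : Fin (m + 1), t (c j) = s (c (j + 1)))
    (x y : QRepSp K s t d)
    (g : ∀ i, (Matrix (Fin (d i)) (Fin (d i)) K)ˣ)
    (hg : ∀ a, (g (t a)).1 * x a = y a * (g (s a)).1)
    (v : Fin (d (nuV s c 0)) → K) :
    ∀ j, cprop K s t d c hc y j ((g (nuV s c 0)).1 *ᵥ v)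
        = (g (nuV s c j)).1 *ᵥ cprop K s t d c hc x j v := by
  intro j
  induction j with
  | zero => rfl
  | succ j ih =>
    funext i
    show (y (c (j : Fin (m + 1))) *ᵥ cprop K s t d c hc y j ((g (nuV s c 0)).1 *ᵥ v))
        (Fin.cast (congrArg d (nuV_succ s t c hc j)).symm i) = _
    rw [ih, Matrix.mulVec_mulVec, ← hg (c (j : Fin (m + 1))),
      ← Matrix.mulVec_mulVec]
    exact g_mulVec_cast K d g (nuV_succ s t c hc j) _ i

lemma cprop_smul (hc : ∀ j : Fin (m + 1), t (c j) = s (c (j + 1)))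
    (α : K) (v : Fin (d (nuV s c 0)) → K) :
    ∀ j, cprop K s t d c hc (fun a => α • Erep K s t d a) j v
        = α ^ j • cprop K s t d c hc (Erep K s t d) j v := by
  intro j
  induction j with
  | zero => simp [cprop]
  | succ j ih =>
    funext i
    simp only [cprop]
    rw [ih, Matrix.mulVec_smul, Matrix.smul_mulVec]
    simp only [Pi.smul_apply, smul_eq_mul, pow_succ]
    ring

lemma cprop_E (hc : ∀ j : Fin (m + 1), t (c j) = s (c (j + 1)))
    (v : Fin (d (nuV s c 0)) → K) :
    ∀ (j : ℕ) (i : Fin (d (nuV s c j))),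
      cprop K s t d c hc (Erep K s t d) j v i
        = if h : ∀ l, l ≤ j → (i : ℕ) < d (nuV s c l) then v ⟨i, h 0 (Nat.zero_le _)⟩
          else 0 := by
  intro j
  induction j with
  | zero =>
    intro i
    have h : ∀ l, l ≤ 0 → (i : ℕ) < d (nuV s c l) := by
      intro l hl
      cases Nat.le_zero.mp hl
      exact i.isLt
    rw [dif_pos h]
    rfl
  | succ j ih =>
    intro i
    show (Erep K s t d (c (j : Fin (m + 1))) *ᵥ cprop K s t d c hc (Erep K s t d) j v)
        (Fin.cast (congrArg d (nuV_succ s t c hc j)).symm i) = _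
    rw [show Erep K s t d (c (j : Fin (m + 1)))
        = EmM K (d (t (c (j : Fin (m + 1))))) (d (s (c (j : Fin (m + 1))))) from rfl]
    rw [EmM_mulVec]
    simp only [Fin.coe_cast]
    by_cases H : ∀ l, l ≤ j + 1 → (i : ℕ) < d (nuV s c l)
    · have h1 : (i : ℕ) < d (s (c (j : Fin (m + 1)))) := H j (Nat.le_succ j)
      rw [dif_pos h1, ih ⟨i, h1⟩, dif_pos (fun l hl => H l (Nat.le_succ_of_le hl)),
        dif_pos H]
    · rw [dif_neg H]
      by_cases h1 : (i : ℕ) < d (s (c (j : Fin (m + 1))))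
      · rw [dif_pos h1, ih ⟨i, h1⟩, dif_neg]
        intro hall
        apply H
        intro l hl
        rcases Nat.lt_or_ge l (j + 1) with h' | h'
        · exact hall l (Nat.lt_succ_iff.mp h')
        · have hl' : l = j + 1 := le_antisymm hl h'
          subst hl'
          exact i.isLt
      · rw [dif_neg h1]

lemma cprop_E_eVec (hc : ∀ j : Fin (m + 1), t (c j) = s (c (j + 1)))
    (hd : ∀ j : Fin (m + 1), 1 ≤ d (s (c j))) (j : ℕ) :
    cprop K s t d c hc (Erep K s t d) j (eVec K (d (nuV s c 0)))
      = eVec K (d (nuV s c j)) := by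
  funext i
  rw [cprop_E]
  by_cases h0 : (i : ℕ) = 0
  · rw [dif_pos]
    · show eVec K (d (nuV s c 0)) _ = eVec K (d (nuV s c j)) i
      simp [eVec, h0]
    · intro l hl
      calc (i : ℕ) < 1 := by omega
        _ ≤ d (nuV s c l) := hd ((l : ℕ) : Fin (m + 1))
  · by_cases H : ∀ l, l ≤ j → (i : ℕ) < d (nuV s c l)
    · rw [dif_pos H]
      simp [eVec, h0]
    · rw [dif_neg H]
      simp [eVec, h0]

lemma cycle_invariant (hc : ∀ j : Fin (m + 1), t (c j) = s (c (j + 1)))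
    (hd : ∀ j : Fin (m + 1), 1 ≤ d (s (c j))) (α β : K) (hα : α ≠ 0)
    (hiso : IsIso K s t (fun a => α • Erep K s t d a) (fun a => β • Erep K s t d a)) :
    α ^ (m + 1) = β ^ (m + 1) := by
  obtain ⟨g, hg⟩ := hiso
  have key := cprop_compat K s t d c hc _ _ g hg (eVec K (d (nuV s c 0))) (m + 1)
  rw [cprop_smul, cprop_smul, cprop_E_eVec K s t d c hc hd, Matrix.mulVec_smul] at key
  have enu : nuV s c (m + 1) = nuV s c 0 := by
    show s (c ((m + 1 : ℕ) : Fin (m + 1))) = s (c ((0 : ℕ) : Fin (m + 1)))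
    rw [Fin.natCast_self, Nat.cast_zero]
  -- the vector u = g₀ ⬝ e₀ is nonzero
  have hu : (g (nuV s c 0)).1 *ᵥ eVec K (d (nuV s c 0)) ≠ 0 :=
    g_mulVec_eVec_ne K d g (nuV s c 0) (hd ((0 : ℕ) : Fin (m + 1)))
  obtain ⟨i0, hi0⟩ := Function.ne_iff.mp hu
  set u := (g (nuV s c 0)).1 *ᵥ eVec K (d (nuV s c 0)) with hudef
  have hi0' : u i0 ≠ 0 := by simpa using hi0
  set i1 : Fin (d (nuV s c (m + 1))) := Fin.cast (congrArg d enu.symm) i0 with hi1def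
  have keyi := congrFun key i1
  simp only [Pi.smul_apply, smul_eq_mul] at keyi
  rw [cprop_E K s t d c hc] at keyi
  have hcastback : ((g (nuV s c (m + 1))).1 *ᵥ eVec K (d (nuV s c (m + 1)))) i1 = u i0 := by
    rw [gEvec_cast K d g enu i1]
    rfl
  rw [hcastback] at keyi
  by_cases hC : ∀ l, l ≤ m + 1 → (i1 : ℕ) < d (nuV s c l)
  · rw [dif_pos hC] at keyi
    have hix : u ⟨(i1 : ℕ), hC 0 (Nat.zero_le _)⟩ = u i0 := rfl
    rw [hix] at keyi
    exact (mul_right_cancel₀ hi0' keyi).symm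
  · rw [dif_neg hC, mul_zero] at keyi
    exact absurd keyi.symm (mul_ne_zero (pow_ne_zero _ hα) hi0')

end Aux

section Aux2

open Matrix

variable (s t : A → V) (d : V → ℕ)

lemma fam_cast (F : ∀ p q : V, Matrix (Fin (d p)) (Fin (d q)) K)
    {p p' q q' : V} (ep : p = p') (eq' : q = q') (i : Fin (d p')) (j : Fin (d q')) :
    F p' q' i j
      = F p q (Fin.cast (congrArg d ep).symm i) (Fin.cast (congrArg d eq').symm j) := by
  subst ep; subst eq'; rfl

open Classical in
/-- The family of representations used in the parallel-arrows case. -/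
noncomputable def krep (b : A) (α : K) : QRepSp K s t d := fun r =>
  if h : r = b then α • Erep K s t d r else Erep K s t d r

lemma kron_invariant (a b : A) (hab : a ≠ b) (hs : s a = s b) (ht : t a = t b)
    (hsa : 1 ≤ d (s a)) (hta : 1 ≤ d (t a)) (α β : K)
    (hiso : IsIso K s t (krep K s t d b α) (krep K s t d b β)) : α = β := by
  obtain ⟨g, hg⟩ := hiso
  have e1 : (g (t a)).1 * EmM K (d (t a)) (d (s a))
      = EmM K (d (t a)) (d (s a)) * (g (s a)).1 := by
    have h := hg a
    simpa [krep, Erep, dif_neg hab] using h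
  have e2 : α • ((g (t b)).1 * EmM K (d (t b)) (d (s b)))
      = β • (EmM K (d (t b)) (d (s b)) * (g (s b)).1) := by
    have h := hg b
    simp only [krep, Erep, eq_self_iff_true, dite_true] at h
    rw [Matrix.mul_smul, Matrix.smul_mul] at h
    exact h
  have hent : ∀ (i : Fin (d (t b))) (j : Fin (d (s b))),
      α * ((g (t b)).1 * EmM K (d (t b)) (d (s b))) i j
        = β * ((g (t b)).1 * EmM K (d (t b)) (d (s b))) i j := by
    intro i j
    have h2 := congrFun (congrFun e2 i) j
    simp only [Matrix.smul_apply, smul_eq_mul] at h2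
    have hL := fam_cast K d (fun p q => (g p).1 * EmM K (d p) (d q)) ht hs i j
    have hR := fam_cast K d (fun p q => EmM K (d p) (d q) * (g q).1) ht hs i j
    beta_reduce at hL hR
    have h3 : (EmM K (d (t b)) (d (s b)) * (g (s b)).1) i j
        = ((g (t b)).1 * EmM K (d (t b)) (d (s b))) i j := by
      rw [hR, ← e1, ← hL]
    rw [h3] at h2
    exact h2
  have hsb : 1 ≤ d (s b) := hs ▸ hsa
  have htb : 1 ≤ d (t b) := ht ▸ hta
  have hcol : ∀ i : Fin (d (t b)),
      ((g (t b)).1 * EmM K (d (t b)) (d (s b))) i ⟨0, hsb⟩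
        = ((g (t b)).1 *ᵥ eVec K (d (t b))) i := by
    intro i
    rw [Matrix.mul_apply, Matrix.mulVec, dotProduct]
    apply Finset.sum_congr rfl
    intro k _
    congr 1
  have hne := g_mulVec_eVec_ne K d g (t b) htb
  obtain ⟨i, hi⟩ := Function.ne_iff.mp hne
  have hfin := hent i ⟨0, hsb⟩
  rw [hcol i] at hfin
  exact mul_right_cancel₀ (by simpa using hi) hfin

lemma exists_pow_seq [Infinite K] (n : ℕ) (hn : 0 < n) :
    ∃ φ : ℕ → K, (∀ i, φ i ≠ 0) ∧ ∀ i j, i ≠ j → φ i ^ n ≠ φ j ^ n := by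
  classical
  have hS : {y : K | ∃ x : K, x ≠ 0 ∧ x ^ n = y}.Infinite := by
    intro hfin
    have hsub : {x : K | x ≠ 0}
        ⊆ ⋃ y ∈ {y : K | ∃ x : K, x ≠ 0 ∧ x ^ n = y}, {x : K | x ^ n = y} :=
      fun x hx => Set.mem_biUnion ⟨x, hx, rfl⟩ rfl
    have hfin2 : {x : K | x ≠ 0}.Finite := by
      refine Set.Finite.subset (Set.Finite.biUnion hfin ?_) hsub
      intro y _
      have hp : (Polynomial.X ^ n - Polynomial.C y : Polynomial K) ≠ 0 :=
        Polynomial.X_pow_sub_C_ne_zero hn y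
      refine Set.Finite.subset (Polynomial.finite_setOf_isRoot hp) ?_
      intro x hx
      simp only [Set.mem_setOf_eq, Polynomial.IsRoot, Polynomial.eval_sub,
        Polynomial.eval_pow, Polynomial.eval_X, Polynomial.eval_C, sub_eq_zero]
      exact hx
    have huniv : (Set.univ : Set K).Finite := by
      have hss : (Set.univ : Set K) ⊆ {x : K | x ≠ 0} ∪ {0} := fun x _ => by
        by_cases h : x = 0 <;> simp [h]
      exact Set.Finite.subset (hfin2.union (Set.finite_singleton 0)) hss
    exact Set.infinite_univ huniv
  let em := hS.natEmbedding
  have ch : ∀ i : ℕ, ∃ x : K, x ≠ 0 ∧ x ^ n = (em i).1 := fun i => (em i).2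
  refine ⟨fun i => (ch i).choose, fun i => (ch i).choose_spec.1, ?_⟩
  intro i j hij hpow
  apply hij
  have : (em i).1 = (em j).1 := by
    rw [← (ch i).choose_spec.2, ← (ch j).choose_spec.2, hpow]
  exact em.injective (Subtype.ext this)

end Aux2

/-- If a quiver contains a cycle, or a pair of parallel arrows, with all dimensions
`≥ 1` on the relevant vertices, then over an infinite field the base change group
`G_d` acts on `R_d(Q)` with infinitely many orbits (so `R_d(Q)` is not
spherical): there are infinitely many pairwise non-isomorphic representations of
dimension vector `d`. -/
theorem infinitely_many_orbits_of_cycle_or_parallel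
    [Infinite K] (s t : A → V) (d : V → ℕ)
    (h : (∃ (m : ℕ) (c : Fin (m + 1) → A),
            (∀ j, t (c j) = s (c (j + 1))) ∧ ∀ j, 1 ≤ d (s (c j))) ∨
         (∃ a b : A, a ≠ b ∧ s a = s b ∧ t a = t b ∧ 1 ≤ d (s a) ∧ 1 ≤ d (t a))) :
    ∃ f : ℕ → QRepSp K s t d,
      ∀ j k, j ≠ k → ¬ IsIso K s t (f j) (f k) := by
  rcases h with ⟨m, c, hc, hd⟩ | ⟨a, b, hab, hs, ht, hsa, hta⟩
  · obtain ⟨φ, hφ0, hφ⟩ := exists_pow_seq K (m + 1) (Nat.succ_pos m)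
    refine ⟨fun n => fun a => φ n • Erep K s t d a, ?_⟩
    intro j k hjk hiso
    exact hφ j k hjk (cycle_invariant K s t d c hc hd (φ j) (φ k) (hφ0 j) hiso)
  · refine ⟨fun n => krep K s t d b (Infinite.natEmbedding K n), ?_⟩
    intro j k hjk hiso
    exact hjk ((Infinite.natEmbedding K).injective
      (kron_invariant K s t d a b hab hs ht hsa hta _ _ hiso))

end QuiverDefs
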